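/- If G is a GP5-graph obtained from a connected graph H with n vertices, then the paired domination number of G equals (2/3)|V(G)|, i.e. γ_{pr}(G) = 4n. -/
import Mathlib


open SimpleGraph Finset

/-- `D` is a dominating set of `G`. -/
def Dominating {V : Type*} (G : SimpleGraph V) (D : Finset V) : Prop :=
  ∀ v : V, ∃ u ∈ D, u = v ∨ G.Adj u v

/-- `D` is a semipaired dominating set of `G`: a dominating set whose vertices can be
partitioned into pairs (via a fixed-point-free involution) at distance at most 2. -/
def SemiPairedDom {V : Type*} (G : SimpleGraph V) (D : Finset V) : Prop :=
  Dominating G D ∧ ∃ f : V → V,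
    (∀ u ∈ D, f u ∈ D) ∧ (∀ u ∈ D, f (f u) = u) ∧ (∀ u ∈ D, f u ≠ u) ∧
    (∀ u ∈ D, G.Adj u (f u) ∨ ∃ w, G.Adj u w ∧ G.Adj w (f u))

/-- `D` is a paired dominating set of `G`: a dominating set whose induced subgraph has a
perfect matching (encoded by a fixed-point-free involution pairing adjacent vertices). -/
def PairedDom {V : Type*} (G : SimpleGraph V) (D : Finset V) : Prop :=
  Dominating G D ∧ ∃ f : V → V,
    (∀ u ∈ D, f u ∈ D) ∧ (∀ u ∈ D, f (f u) = u) ∧ (∀ u ∈ D, f u ≠ u) ∧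
    (∀ u ∈ D, G.Adj u (f u))

/-- The domination number. -/
noncomputable def domNum (V : Type*) [Fintype V] (G : SimpleGraph V) : ℕ :=
  sInf {k : ℕ | ∃ D : Finset V, Dominating G D ∧ D.card = k}

/-- The semipaired domination number. -/
noncomputable def semiPairedDomNum (V : Type*) [Fintype V] (G : SimpleGraph V) : ℕ :=
  sInf {k : ℕ | ∃ D : Finset V, SemiPairedDom G D ∧ D.card = k}

/-- The paired domination number. -/
noncomputable def pairedDomNum (V : Type*) [Fintype V] (G : SimpleGraph V) : ℕ :=
  sInf {k : ℕ | ∃ D : Finset V, PairedDom G D ∧ D.card = k}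

/-- The GP5-graph obtained from `H` by attaching, for each vertex `a`, a disjoint path
`a_a – b_a – c_a – d_a – e_a` (the vertices `Sum.inr (a, 0), …, Sum.inr (a, 4)`) and
joining `a` to the central vertex `c_a = Sum.inr (a, 2)`. -/
def GP5 {α : Type*} (H : SimpleGraph α) : SimpleGraph (α ⊕ α × Fin 5) :=
  SimpleGraph.fromRel (fun u v =>
    (∃ a b, u = Sum.inl a ∧ v = Sum.inl b ∧ H.Adj a b) ∨
    (∃ a, u = Sum.inl a ∧ v = Sum.inr (a, 2)) ∨
    (∃ (a : α) (j k : Fin 5), u = Sum.inr (a, j) ∧ v = Sum.inr (a, k) ∧ (k : ℕ) = (j : ℕ) + 1))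


section GP5Aux

variable {α : Type*} {H : SimpleGraph α}

set_option linter.unusedSectionVars false in
lemma gp5_adj_inr_iff {a : α} {j : Fin 5} {x : α ⊕ α × Fin 5} :
    (GP5 H).Adj (Sum.inr (a, j)) x ↔
      (j = 2 ∧ x = Sum.inl a) ∨
      ∃ k : Fin 5, x = Sum.inr (a, k) ∧ ((k : ℕ) = (j : ℕ) + 1 ∨ (j : ℕ) = (k : ℕ) + 1) := by
  rw [GP5, SimpleGraph.fromRel_adj]
  constructor
  · rintro ⟨hne, h | h⟩
    · rcases h with ⟨a', b', h1, _, _⟩ | ⟨a', h1, _⟩ | ⟨a', j', k', h1, h2, h3⟩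
      · exact absurd h1 (by simp)
      · exact absurd h1 (by simp)
      · obtain ⟨rfl, rfl⟩ : a' = a ∧ j' = j := by
          simpa [eq_comm, Prod.ext_iff, and_comm] using h1
        exact Or.inr ⟨k', h2, Or.inl h3⟩
    · rcases h with ⟨a', b', _, h2, _⟩ | ⟨a', h1, h2⟩ | ⟨a', j', k', h1, h2, h3⟩
      · exact absurd h2 (by simp)
      · obtain ⟨rfl, rfl⟩ : a' = a ∧ j = 2 := by
          simpa [eq_comm, Prod.ext_iff, and_comm] using h2
        exact Or.inl ⟨rfl, h1⟩
      · obtain ⟨rfl, rfl⟩ : a' = a ∧ k' = j := by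
          simpa [eq_comm, Prod.ext_iff, and_comm] using h2
        exact Or.inr ⟨j', h1, Or.inr h3⟩
  · rintro (⟨rfl, rfl⟩ | ⟨k, rfl, hk | hk⟩)
    · exact ⟨by simp, Or.inr (Or.inr (Or.inl ⟨a, rfl, rfl⟩))⟩
    · refine ⟨by simp [Prod.ext_iff]; omega, Or.inl (Or.inr (Or.inr ⟨a, j, k, rfl, rfl, hk⟩))⟩
    · refine ⟨by simp [Prod.ext_iff]; omega, Or.inr (Or.inr (Or.inr ⟨a, k, j, rfl, rfl, hk⟩))⟩

def gp5pair : α ⊕ α × Fin 5 → α ⊕ α × Fin 5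
  | Sum.inl a => Sum.inl a
  | Sum.inr (a, j) =>
      Sum.inr (a, if j = 1 then 2 else if j = 2 then 1 else if j = 3 then 4 else
        if j = 4 then 3 else j)

def gp5D (α : Type*) [Fintype α] [DecidableEq α] : Finset (α ⊕ α × Fin 5) :=
  (Finset.univ ×ˢ ({1, 2, 3, 4} : Finset (Fin 5))).map ⟨Sum.inr, Sum.inr_injective⟩

lemma mem_gp5D [Fintype α] [DecidableEq α] {x : α ⊕ α × Fin 5} :
    x ∈ gp5D α ↔ ∃ (a : α) (j : Fin 5),
      (j = 1 ∨ j = 2 ∨ j = 3 ∨ j = 4) ∧ x = Sum.inr (a, j) := by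
  simp only [gp5D, Finset.mem_map, Finset.mem_product, Finset.mem_univ, true_and,
    Finset.mem_insert, Finset.mem_singleton, Function.Embedding.coeFn_mk, Prod.exists]
  constructor
  · rintro ⟨a, j, hj, rfl⟩; exact ⟨a, j, hj, rfl⟩
  · rintro ⟨a, j, hj, rfl⟩; exact ⟨a, j, hj, rfl⟩

lemma gp5_upper [Fintype α] [DecidableEq α] : PairedDom (GP5 H) (gp5D α) := by
  constructor
  · intro v
    match v with
    | Sum.inl a =>
        refine ⟨Sum.inr (a, 2), mem_gp5D.mpr ⟨a, 2, by tauto, rfl⟩, Or.inr ?_⟩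
        rw [gp5_adj_inr_iff]; exact Or.inl ⟨rfl, rfl⟩
    | Sum.inr (a, j) =>
        by_cases hj : j = 0
        · subst hj
          refine ⟨Sum.inr (a, 1), mem_gp5D.mpr ⟨a, 1, by tauto, rfl⟩, Or.inr ?_⟩
          rw [gp5_adj_inr_iff]
          exact Or.inr ⟨0, rfl, Or.inr (by decide)⟩
        · refine ⟨Sum.inr (a, j), mem_gp5D.mpr ⟨a, j, ?_, rfl⟩, Or.inl rfl⟩
          fin_cases j <;> simp_all
  · refine ⟨gp5pair, ?_, ?_, ?_, ?_⟩
    · intro u hu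
      obtain ⟨a, j, hj, rfl⟩ := mem_gp5D.mp hu
      rcases hj with rfl | rfl | rfl | rfl
      · exact mem_gp5D.mpr ⟨a, 2, by tauto, rfl⟩
      · exact mem_gp5D.mpr ⟨a, 1, by tauto, rfl⟩
      · exact mem_gp5D.mpr ⟨a, 4, by tauto, rfl⟩
      · exact mem_gp5D.mpr ⟨a, 3, by tauto, rfl⟩
    · intro u hu
      obtain ⟨a, j, hj, rfl⟩ := mem_gp5D.mp hu
      rcases hj with rfl | rfl | rfl | rfl <;> rfl
    · intro u hu
      obtain ⟨a, j, hj, rfl⟩ := mem_gp5D.mp hu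
      rcases hj with rfl | rfl | rfl | rfl <;> simp [gp5pair]
    · intro u hu
      obtain ⟨a, j, hj, rfl⟩ := mem_gp5D.mp hu
      rcases hj with rfl | rfl | rfl | rfl
      · exact gp5_adj_inr_iff.mpr (Or.inr ⟨2, rfl, by decide⟩)
      · exact gp5_adj_inr_iff.mpr (Or.inr ⟨1, rfl, by decide⟩)
      · exact gp5_adj_inr_iff.mpr (Or.inr ⟨4, rfl, by decide⟩)
      · exact gp5_adj_inr_iff.mpr (Or.inr ⟨3, rfl, by decide⟩)

lemma gp5_lower [Fintype α] [DecidableEq α] {D : Finset (α ⊕ α × Fin 5)}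
    (hD : PairedDom (GP5 H) D) : 4 * Fintype.card α ≤ D.card := by
  obtain ⟨hdom, f, hf1, hf2, hf3, hf4⟩ := hD
  have hone : ∀ a : α, Sum.inr (a, (1 : Fin 5)) ∈ D := by
    intro a
    obtain ⟨u, hu, h⟩ := hdom (Sum.inr (a, (0 : Fin 5)))
    have hcases : u = Sum.inr (a, (0 : Fin 5)) ∨ u = Sum.inr (a, (1 : Fin 5)) := by
      rcases h with rfl | h
      · exact Or.inl rfl
      · rcases gp5_adj_inr_iff.mp h.symm with ⟨h2, rfl⟩ | ⟨k, rfl, hk | hk⟩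
        · exact absurd h2 (by decide)
        · right; congr 2; omega
        · exact absurd hk (by omega)
    rcases hcases with rfl | rfl
    · have hadj := hf4 _ hu
      have hfD := hf1 _ hu
      rcases gp5_adj_inr_iff.mp hadj with ⟨h2, _⟩ | ⟨k, hfk, hk | hk⟩
      · exact absurd h2 (by decide)
      · have hk1 : k = 1 := by omega
        rw [hfk, hk1] at hfD; exact hfD
      · exact absurd hk (by omega)
    · exact hu
  have hthree : ∀ a : α, Sum.inr (a, (3 : Fin 5)) ∈ D := by
    intro a
    obtain ⟨u, hu, h⟩ := hdom (Sum.inr (a, (4 : Fin 5)))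
    have hcases : u = Sum.inr (a, (4 : Fin 5)) ∨ u = Sum.inr (a, (3 : Fin 5)) := by
      rcases h with rfl | h
      · exact Or.inl rfl
      · rcases gp5_adj_inr_iff.mp h.symm with ⟨h2, rfl⟩ | ⟨k, rfl, hk | hk⟩
        · exact absurd h2 (by decide)
        · exact absurd hk (by omega)
        · right; congr 2; omega
    rcases hcases with rfl | rfl
    · have hadj := hf4 _ hu
      have hfD := hf1 _ hu
      rcases gp5_adj_inr_iff.mp hadj with ⟨h2, _⟩ | ⟨k, hfk, hk | hk⟩
      · exact absurd h2 (by decide)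
      · exact absurd hk (by omega)
      · have hk1 : k = 3 := by omega
        rw [hfk, hk1] at hfD; exact hfD
    · exact hu
  have hp1 : ∀ a : α, f (Sum.inr (a, (1 : Fin 5))) = Sum.inr (a, (0 : Fin 5)) ∨
      f (Sum.inr (a, (1 : Fin 5))) = Sum.inr (a, (2 : Fin 5)) := by
    intro a
    rcases gp5_adj_inr_iff.mp (hf4 _ (hone a)) with ⟨h2, _⟩ | ⟨k, hfk, hk | hk⟩
    · exact absurd h2 (by decide)
    · right; rw [hfk]; congr 2; omega
    · left; rw [hfk]; congr 2; omega
  have hp3 : ∀ a : α, f (Sum.inr (a, (3 : Fin 5))) = Sum.inr (a, (2 : Fin 5)) ∨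
      f (Sum.inr (a, (3 : Fin 5))) = Sum.inr (a, (4 : Fin 5)) := by
    intro a
    rcases gp5_adj_inr_iff.mp (hf4 _ (hthree a)) with ⟨h2, _⟩ | ⟨k, hfk, hk | hk⟩
    · exact absurd h2 (by decide)
    · right; rw [hfk]; congr 2; omega
    · left; rw [hfk]; congr 2; omega
  have hne13 : ∀ a : α, f (Sum.inr (a, (1 : Fin 5))) ≠ f (Sum.inr (a, (3 : Fin 5))) := by
    intro a h
    have h1 := hf2 _ (hone a)
    have h3 := hf2 _ (hthree a)
    rw [h] at h1
    rw [h1] at h3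
    simp [Prod.ext_iff] at h3
  set S : α → Finset (α ⊕ α × Fin 5) := fun a =>
    {Sum.inr (a, (1 : Fin 5)), Sum.inr (a, (3 : Fin 5)),
      f (Sum.inr (a, (1 : Fin 5))), f (Sum.inr (a, (3 : Fin 5)))} with hS
  have hsub : Finset.univ.biUnion S ⊆ D := by
    intro x hx
    simp only [Finset.mem_biUnion, Finset.mem_univ, true_and, hS, Finset.mem_insert,
      Finset.mem_singleton] at hx
    obtain ⟨a, rfl | rfl | rfl | rfl⟩ := hx
    · exact hone a
    · exact hthree a
    · exact hf1 _ (hone a)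
    · exact hf1 _ (hthree a)
  have hcard : ∀ a : α, (S a).card = 4 := by
    intro a
    rcases hp1 a with h1 | h1 <;> rcases hp3 a with h3 | h3 <;>
      [skip; skip; (exact absurd (h1.trans h3.symm) (hne13 a)); skip] <;>
    · rw [hS]
      simp only [h1, h3]
      rw [Finset.card_insert_of_notMem (by simp), Finset.card_insert_of_notMem (by simp),
        Finset.card_insert_of_notMem (by simp), Finset.card_singleton]
  have hdisj : ∀ a ∈ (Finset.univ : Finset α), ∀ b ∈ (Finset.univ : Finset α),
      a ≠ b → Disjoint (S a) (S b) := by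
    intro a _ b _ hab
    have key : ∀ c : α, ∀ x ∈ S c, ∃ j : Fin 5, x = Sum.inr (c, j) := by
      intro c x hx
      simp only [hS, Finset.mem_insert, Finset.mem_singleton] at hx
      rcases hx with rfl | rfl | rfl | rfl
      · exact ⟨1, rfl⟩
      · exact ⟨3, rfl⟩
      · rcases hp1 c with h | h <;> rw [h] <;> exact ⟨_, rfl⟩
      · rcases hp3 c with h | h <;> rw [h] <;> exact ⟨_, rfl⟩
    rw [Finset.disjoint_left]
    intro x hxa hxb
    obtain ⟨j, rfl⟩ := key a x hxa
    obtain ⟨k, hk⟩ := key b _ hxb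
    simp only [Sum.inr.injEq, Prod.mk.injEq] at hk
    exact hab hk.1
  calc 4 * Fintype.card α = (Finset.univ.biUnion S).card := by
        rw [Finset.card_biUnion hdisj]
        simp [hcard, mul_comm]
    _ ≤ D.card := Finset.card_le_card hsub

end GP5Aux

/-- If `G` is the GP5-graph of a connected graph `H` with `n` vertices,
then `γ_{pr}(G) = 4n = (2/3)|V(G)|`. -/
theorem gp5_pairedDomNum {α : Type*} [Fintype α] [DecidableEq α]
    (H : SimpleGraph α) (hH : H.Connected) :
    pairedDomNum (α ⊕ α × Fin 5) (GP5 H) = 4 * Fintype.card α := by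
  have hmem : 4 * Fintype.card α ∈
      {k : ℕ | ∃ D : Finset (α ⊕ α × Fin 5), PairedDom (GP5 H) D ∧ D.card = k} := by
    refine ⟨gp5D α, gp5_upper, ?_⟩
    rw [gp5D, Finset.card_map, Finset.card_product]
    simp [mul_comm]
  refine le_antisymm (Nat.sInf_le hmem) (le_csInf ⟨_, hmem⟩ ?_)
  rintro k ⟨D, hD, rfl⟩
  exact gp5_lower hD
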